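/- The Lie algebra L_{6,4} (the inhomogeneous algebra Isl(2,ℝ)) is a contraction of so(2,2), the real Lie algebra of 4×4 real matrices A satisfying Aᵀ J + J A = 0 with J = diag(1,1,−1,−1), under the commutator bracket. -/

import Mathlib

open Filter Topology

/-- `IsContraction g h` : the Lie algebra `h` is a contraction of the Lie algebra `g`. -/
def IsContraction (g h : Type*) [LieRing g] [LieAlgebra ℝ g] [TopologicalSpace g]
    [LieRing h] [LieAlgebra ℝ h] : Prop :=
  ∃ (f : ℝ → (g ≃ₗ[ℝ] g)) (e : g ≃ₗ[ℝ] h), ∀ X Y : g,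
    Filter.Tendsto (fun t : ℝ => (f t).symm ⁅f t X, f t Y⁆) Filter.atTop
      (nhds (e.symm ⁅e X, e Y⁆))

/-- Structure constants of `L_{6,4}` (upper triangular part, 0-based indices). -/
def L64T {L : Type*} [AddCommGroup L] [Module ℝ L] (b : Fin 6 → L) : Fin 6 → Fin 6 → L :=
  fun i j =>
    if i = 0 ∧ j = 1 then (2 : ℝ) • b 1 else
    if i = 0 ∧ j = 2 then (-2 : ℝ) • b 2 else
    if i = 1 ∧ j = 2 then b 0 else
    if i = 0 ∧ j = 3 then (2 : ℝ) • b 3 else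
    if i = 0 ∧ j = 5 then (-2 : ℝ) • b 5 else
    if i = 1 ∧ j = 4 then (2 : ℝ) • b 3 else
    if i = 1 ∧ j = 5 then b 4 else
    if i = 2 ∧ j = 3 then b 4 else
    if i = 2 ∧ j = 4 then (2 : ℝ) • b 5 else 0

attribute [local instance 100] LieRing.ofAssociativeRing

/-- `so(2,2)`: `4×4` real matrices `A` with `Aᵀ J + J A = 0`, `J = diag(1,1,-1,-1)`. -/
noncomputable abbrev so22 : LieSubalgebra ℝ (Matrix (Fin 4) (Fin 4) ℝ) :=
  skewAdjointMatricesLieSubalgebra (Matrix.diagonal ![1, 1, -1, -1])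

namespace L64Contraction

/-- An adapted basis of `so(2,2)` (as matrices). -/
def Bmat : Fin 6 → Matrix (Fin 4) (Fin 4) ℝ
  | 0 => !![0,0,0,0; 0,0,0,2; 0,0,0,0; 0,2,0,0]
  | 1 => !![0,0,0,0; 0,0,-1,0; 0,-1,0,1; 0,0,-1,0]
  | 2 => !![0,0,0,0; 0,0,-1,0; 0,-1,0,-1; 0,0,1,0]
  | 3 => !![0,-1,0,1; 1,0,0,0; 0,0,0,0; 1,0,0,0]
  | 4 => !![0,0,-2,0; 0,0,0,0; -2,0,0,0; 0,0,0,0]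
  | 5 => !![0,-1,0,-1; 1,0,0,0; 0,0,0,0; -1,0,0,0]

set_option maxHeartbeats 1000000 in
lemma hBmem : ∀ k, Bmat k ∈ so22 := by
  intro k
  rw [mem_skewAdjointMatricesLieSubalgebra, mem_skewAdjointMatricesSubmodule]
  show _ = _
  fin_cases k <;> · ext i j; fin_cases i <;> fin_cases j <;>
    norm_num [Bmat, Matrix.mul_apply, Fin.sum_univ_four, Matrix.diagonal,
      Matrix.transpose_apply, Matrix.vecHead, Matrix.vecTail]

/-- Relations satisfied by the entries of elements of `so(2,2)`. -/
lemma so22_rels {A : Matrix (Fin 4) (Fin 4) ℝ} (h : A ∈ so22) :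
    A 0 0 = 0 ∧ A 1 1 = 0 ∧ A 2 2 = 0 ∧ A 3 3 = 0 ∧
    A 1 0 = -A 0 1 ∧ A 2 0 = A 0 2 ∧ A 3 0 = A 0 3 ∧
    A 2 1 = A 1 2 ∧ A 3 1 = A 1 3 ∧ A 3 2 = -A 2 3 := by
  rw [mem_skewAdjointMatricesLieSubalgebra, mem_skewAdjointMatricesSubmodule] at h
  have h' := fun i j => congrFun (congrFun h i) j
  have e00 := h' 0 0; have e11 := h' 1 1; have e22 := h' 2 2; have e33 := h' 3 3
  have e01 := h' 0 1; have e02 := h' 0 2; have e03 := h' 0 3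
  have e12 := h' 1 2; have e13 := h' 1 3; have e23 := h' 2 3
  simp [Matrix.mul_apply, Fin.sum_univ_four, Matrix.diagonal, Matrix.transpose_apply] at e00 e11 e22 e33 e01 e02 e03 e12 e13 e23
  refine ⟨?_,?_,?_,?_,?_,?_,?_,?_,?_,?_⟩ <;> linarith

lemma coe_add' (A B : ↥so22) :
    ((A + B : ↥so22) : Matrix (Fin 4) (Fin 4) ℝ) = (A : Matrix (Fin 4) (Fin 4) ℝ) + B := rfl

lemma coe_smul' (r : ℝ) (A : ↥so22) :
    ((r • A : ↥so22) : Matrix (Fin 4) (Fin 4) ℝ) = r • (A : Matrix (Fin 4) (Fin 4) ℝ) := rfl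

/-- Coordinates with respect to the basis `Bmat`. -/
noncomputable def psi (A : Matrix (Fin 4) (Fin 4) ℝ) : Fin 6 → ℝ
  | 0 => A 1 3 / 2
  | 1 => (A 2 3 - A 1 2)/2
  | 2 => (-(A 1 2) - A 2 3)/2
  | 3 => (A 0 3 - A 0 1)/2
  | 4 => -(A 0 2)/2
  | 5 => (-(A 0 1) - A 0 3)/2

set_option maxHeartbeats 4000000 in
noncomputable def e6 : ↥so22 ≃ₗ[ℝ] (Fin 6 → ℝ) where
  toFun A := psi A.val
  map_add' A B := by
    funext i; fin_cases i <;>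
      simp [psi, coe_add', Matrix.add_apply] <;> ring
  map_smul' r A := by
    funext i; fin_cases i <;>
      simp [psi, coe_smul', Matrix.smul_apply] <;> ring
  invFun x := ∑ k, x k • (⟨Bmat k, hBmem k⟩ : ↥so22)
  left_inv A := by
    obtain ⟨h00,h11,h22,h33,h10,h20,h30,h21,h31,h32⟩ := so22_rels A.2
    apply Subtype.ext
    have hval : ((∑ k, psi A.val k • (⟨Bmat k, hBmem k⟩ : ↥so22) : ↥so22) : Matrix (Fin 4) (Fin 4) ℝ)
        = ∑ k, psi A.val k • Bmat k := by
      rw [Fin.sum_univ_six, Fin.sum_univ_six]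
      simp only [coe_add', coe_smul']
    show _ = A.val
    rw [hval]
    ext i j
    fin_cases i <;> fin_cases j <;>
      · simp [Fin.sum_univ_six, psi, Bmat, Matrix.vecHead, Matrix.vecTail]
        try linarith
  right_inv x := by
    have hval : ((∑ k, x k • (⟨Bmat k, hBmem k⟩ : ↥so22) : ↥so22) : Matrix (Fin 4) (Fin 4) ℝ)
        = ∑ k, x k • Bmat k := by
      rw [Fin.sum_univ_six, Fin.sum_univ_six]
      simp only [coe_add', coe_smul']
    show psi _ = x
    rw [hval]
    funext i
    fin_cases i <;>
      · simp [Fin.sum_univ_six, psi, Bmat, Matrix.vecHead, Matrix.vecTail]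
        try ring

/-- Limit (contracted) bracket in coordinates: precisely the `L_{6,4}` structure constants. -/
def br0 (x y : Fin 6 → ℝ) : Fin 6 → ℝ
  | 0 => x 1*y 2 - x 2*y 1
  | 1 => 2*(x 0*y 1 - x 1*y 0)
  | 2 => -2*(x 0*y 2 - x 2*y 0)
  | 3 => 2*(x 0*y 3 - x 3*y 0) + 2*(x 1*y 4 - x 4*y 1)
  | 4 => (x 1*y 5 - x 5*y 1) + (x 2*y 3 - x 3*y 2)
  | 5 => -2*(x 0*y 5 - x 5*y 0) + 2*(x 2*y 4 - x 4*y 2)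

/-- The part of the `so(2,2)` bracket that dies in the contraction. -/
def pp (x y : Fin 6 → ℝ) : Fin 6 → ℝ
  | 0 => -(x 3*y 5 - x 5*y 3)
  | 1 => 2*(x 3*y 4 - x 4*y 3)
  | 2 => -2*(x 4*y 5 - x 5*y 4)
  | _ => 0

lemma e6_apply (U : ↥so22) : e6 U = psi U.val := rfl

set_option maxHeartbeats 2000000 in
/-- The bracket of `so(2,2)` in the coordinates given by `e6`. -/
lemma e6_bracket (U V : ↥so22) :
    e6 ⁅U, V⁆ = br0 (e6 U) (e6 V) + pp (e6 U) (e6 V) := by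
  obtain ⟨a00,a11,a22,a33,a10,a20,a30,a21,a31,a32⟩ := so22_rels U.2
  obtain ⟨b00,b11,b22,b33,b10,b20,b30,b21,b31,b32⟩ := so22_rels V.2
  have hcoe : ((⁅U, V⁆ : ↥so22) : Matrix (Fin 4) (Fin 4) ℝ)
      = (U : Matrix (Fin 4) (Fin 4) ℝ) * V - (V : Matrix (Fin 4) (Fin 4) ℝ) * U := by
    rw [LieSubalgebra.coe_bracket, Ring.lie_def]
  funext k
  rw [Pi.add_apply, e6_apply, hcoe, e6_apply, e6_apply]
  fin_cases k <;>
    · simp [psi, br0, pp, Matrix.sub_apply, Matrix.mul_apply, Fin.sum_univ_four,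
        a00,a11,a22,a33,a10,a20,a30,a21,a31,a32, b00,b11,b22,b33,b10,b20,b30,b21,b31,b32]
      ring

noncomputable def sfun (t : ℝ) : ℝ := (max t 1)⁻¹

lemma sfun_pos (t : ℝ) : 0 < sfun t := by
  have : (0:ℝ) < max t 1 := lt_of_lt_of_le one_pos (le_max_right t 1)
  exact inv_pos.mpr this

lemma sfun_ne (t : ℝ) : sfun t ≠ 0 := ne_of_gt (sfun_pos t)

noncomputable def dvec (t : ℝ) : Fin 6 → ℝ
  | 0 => 1 | 1 => 1 | 2 => 1 | _ => sfun t

lemma dvec_ne (t : ℝ) (i : Fin 6) : dvec t i ≠ 0 := by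
  fin_cases i <;> simp [dvec, sfun_ne t]

noncomputable def scaleEq (t : ℝ) : (Fin 6 → ℝ) ≃ₗ[ℝ] (Fin 6 → ℝ) where
  toFun x := fun i => dvec t i * x i
  invFun x := fun i => (dvec t i)⁻¹ * x i
  left_inv x := by
    funext i
    show (dvec t i)⁻¹ * (dvec t i * x i) = x i
    rw [← mul_assoc, inv_mul_cancel₀ (dvec_ne t i), one_mul]
  right_inv x := by
    funext i
    show dvec t i * ((dvec t i)⁻¹ * x i) = x i
    rw [← mul_assoc, mul_inv_cancel₀ (dvec_ne t i), one_mul]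
  map_add' x y := by funext i; simp [Pi.add_apply]; ring
  map_smul' r x := by funext i; simp; ring

lemma scaleEq_apply (t : ℝ) (x : Fin 6 → ℝ) (i : Fin 6) : scaleEq t x i = dvec t i * x i := rfl
lemma scaleEq_symm_apply (t : ℝ) (x : Fin 6 → ℝ) (i : Fin 6) :
    (scaleEq t).symm x i = (dvec t i)⁻¹ * x i := rfl

/-- The contraction family in coordinates: the crucial scaling computation. -/
lemma scale_bracket (t : ℝ) (x y : Fin 6 → ℝ) :
    (scaleEq t).symm (br0 (scaleEq t x) (scaleEq t y) + pp (scaleEq t x) (scaleEq t y))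
      = br0 x y + (sfun t)^2 • pp x y := by
  have hs := sfun_ne t
  funext k
  fin_cases k <;>
    · rw [scaleEq_symm_apply]
      simp only [Pi.add_apply, Pi.smul_apply, br0, pp, scaleEq_apply, dvec, smul_eq_mul, Fin.reduceFinMk, Fin.isValue]
      field_simp
      all_goals ring

noncomputable def fequiv (t : ℝ) : ↥so22 ≃ₗ[ℝ] ↥so22 :=
  e6.trans ((scaleEq t).trans e6.symm)

lemma fequiv_key (t : ℝ) (X Y : ↥so22) :
    (fequiv t).symm ⁅fequiv t X, fequiv t Y⁆
      = e6.symm (br0 (e6 X) (e6 Y)) + (sfun t)^2 • e6.symm (pp (e6 X) (e6 Y)) := by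
  have h1 : (fequiv t).symm ⁅fequiv t X, fequiv t Y⁆
      = e6.symm ((scaleEq t).symm (e6 ⁅fequiv t X, fequiv t Y⁆)) := by
    simp [fequiv]
  have h2 : e6 (fequiv t X) = scaleEq t (e6 X) := by simp [fequiv]
  have h3 : e6 (fequiv t Y) = scaleEq t (e6 Y) := by simp [fequiv]
  rw [h1, e6_bracket, h2, h3, scale_bracket, map_add, map_smul]

section Mside

variable {M : Type} [LieRing M] [LieAlgebra ℝ M] (c : Module.Basis (Fin 6) ℝ M)

lemma lie_sum' (x : M) (f : Fin 6 → M) : ⁅x, ∑ i, f i⁆ = ∑ i, ⁅x, f i⁆ :=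
  map_sum (LieAlgebra.ad ℝ M x) f Finset.univ

lemma sum_lie' (f : Fin 6 → M) (y : M) : ⁅∑ i, f i, y⁆ = ∑ i, ⁅f i, y⁆ := by
  rw [← lie_skew, lie_sum', ← Finset.sum_neg_distrib]
  exact Finset.sum_congr rfl fun i _ => lie_skew (f i) y

/-- The bracket table of `L_{6,4}` in both triangles. -/
lemma bracket_table (hM : ∀ i j : Fin 6, i < j → ⁅c i, c j⁆ = L64T (⇑c) i j) (i j : Fin 6) :
    ⁅c i, c j⁆ = if i < j then L64T (⇑c) i j else if j < i then -(L64T (⇑c) j i) else 0 := by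
  rcases lt_trichotomy i j with h | h | h
  · rw [if_pos h]; exact hM i j h
  · subst h; simp
  · rw [if_neg (not_lt_of_gt h), if_pos h, ← hM j i h, lie_skew]

set_option maxHeartbeats 4000000 in
set_option maxRecDepth 100000 in
lemma M_bracket (hM : ∀ i j : Fin 6, i < j → ⁅c i, c j⁆ = L64T (⇑c) i j) (u v : M) :
    ⁅u, v⁆ = ∑ k, br0 (c.equivFun u) (c.equivFun v) k • c k := by
  have h01 : ⁅c 0, c 1⁆ = (2:ℝ) • c 1 := by
    rw [hM 0 1 (by decide)]; simp (config := { decide := true }) [L64T]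
  have h10 : ⁅c 1, c 0⁆ = -((2:ℝ) • c 1) := by rw [← lie_skew, h01]
  have h02 : ⁅c 0, c 2⁆ = (-2:ℝ) • c 2 := by
    rw [hM 0 2 (by decide)]; simp (config := { decide := true }) [L64T]
  have h20 : ⁅c 2, c 0⁆ = -((-2:ℝ) • c 2) := by rw [← lie_skew, h02]
  have h03 : ⁅c 0, c 3⁆ = (2:ℝ) • c 3 := by
    rw [hM 0 3 (by decide)]; simp (config := { decide := true }) [L64T]
  have h30 : ⁅c 3, c 0⁆ = -((2:ℝ) • c 3) := by rw [← lie_skew, h03]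
  have h04 : ⁅c 0, c 4⁆ = 0 := by
    rw [hM 0 4 (by decide)]; simp (config := { decide := true }) [L64T]
  have h40 : ⁅c 4, c 0⁆ = -(0) := by rw [← lie_skew, h04]
  have h05 : ⁅c 0, c 5⁆ = (-2:ℝ) • c 5 := by
    rw [hM 0 5 (by decide)]; simp (config := { decide := true }) [L64T]
  have h50 : ⁅c 5, c 0⁆ = -((-2:ℝ) • c 5) := by rw [← lie_skew, h05]
  have h12 : ⁅c 1, c 2⁆ = c 0 := by
    rw [hM 1 2 (by decide)]; simp (config := { decide := true }) [L64T]
  have h21 : ⁅c 2, c 1⁆ = -(c 0) := by rw [← lie_skew, h12]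
  have h13 : ⁅c 1, c 3⁆ = 0 := by
    rw [hM 1 3 (by decide)]; simp (config := { decide := true }) [L64T]
  have h31 : ⁅c 3, c 1⁆ = -(0) := by rw [← lie_skew, h13]
  have h14 : ⁅c 1, c 4⁆ = (2:ℝ) • c 3 := by
    rw [hM 1 4 (by decide)]; simp (config := { decide := true }) [L64T]
  have h41 : ⁅c 4, c 1⁆ = -((2:ℝ) • c 3) := by rw [← lie_skew, h14]
  have h15 : ⁅c 1, c 5⁆ = c 4 := by
    rw [hM 1 5 (by decide)]; simp (config := { decide := true }) [L64T]
  have h51 : ⁅c 5, c 1⁆ = -(c 4) := by rw [← lie_skew, h15]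
  have h23 : ⁅c 2, c 3⁆ = c 4 := by
    rw [hM 2 3 (by decide)]; simp (config := { decide := true }) [L64T]
  have h32 : ⁅c 3, c 2⁆ = -(c 4) := by rw [← lie_skew, h23]
  have h24 : ⁅c 2, c 4⁆ = (2:ℝ) • c 5 := by
    rw [hM 2 4 (by decide)]; simp (config := { decide := true }) [L64T]
  have h42 : ⁅c 4, c 2⁆ = -((2:ℝ) • c 5) := by rw [← lie_skew, h24]
  have h25 : ⁅c 2, c 5⁆ = 0 := by
    rw [hM 2 5 (by decide)]; simp (config := { decide := true }) [L64T]
  have h52 : ⁅c 5, c 2⁆ = -(0) := by rw [← lie_skew, h25]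
  have h34 : ⁅c 3, c 4⁆ = 0 := by
    rw [hM 3 4 (by decide)]; simp (config := { decide := true }) [L64T]
  have h43 : ⁅c 4, c 3⁆ = -(0) := by rw [← lie_skew, h34]
  have h35 : ⁅c 3, c 5⁆ = 0 := by
    rw [hM 3 5 (by decide)]; simp (config := { decide := true }) [L64T]
  have h53 : ⁅c 5, c 3⁆ = -(0) := by rw [← lie_skew, h35]
  have h45 : ⁅c 4, c 5⁆ = 0 := by
    rw [hM 4 5 (by decide)]; simp (config := { decide := true }) [L64T]
  have h54 : ⁅c 5, c 4⁆ = -(0) := by rw [← lie_skew, h45]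
  conv_lhs => rw [← c.sum_equivFun u, ← c.sum_equivFun v]
  rw [sum_lie']
  simp only [lie_sum', smul_lie, lie_smul]
  rw [Fin.sum_univ_six]
  simp only [Fin.sum_univ_six]
  simp only [h01, h10, h02, h20, h03, h30, h04, h40, h05, h50, h12, h21, h13, h31, h14, h41, h15, h51, h23, h32, h24, h42, h25, h52, h34, h43, h35, h53, h45, h54, lie_self, smul_zero, neg_zero, add_zero, zero_add, smul_neg, br0]
  module

set_option maxHeartbeats 1000000 in
lemma M_equivFun_bracket (hM : ∀ i j : Fin 6, i < j → ⁅c i, c j⁆ = L64T (⇑c) i j) (u v : M) :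
    c.equivFun ⁅u, v⁆ = br0 (c.equivFun u) (c.equivFun v) := by
  rw [M_bracket c hM u v]
  funext k
  simp [Module.Basis.equivFun_apply, Finsupp.single_apply]

end Mside

lemma sfun_sq_tendsto : Filter.Tendsto (fun t : ℝ => (sfun t)^2) Filter.atTop (nhds 0) := by
  have h1 : Filter.Tendsto (fun t : ℝ => max t 1) Filter.atTop Filter.atTop :=
    Filter.tendsto_atTop_mono (fun t => le_max_left t 1) Filter.tendsto_id
  have h2 : Filter.Tendsto sfun Filter.atTop (nhds 0) := tendsto_inv_atTop_zero.comp h1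
  simpa using h2.pow 2

lemma so22_tendsto (Z W : ↥so22) :
    Filter.Tendsto (fun t : ℝ => Z + (sfun t)^2 • W) Filter.atTop (nhds Z) := by
  rw [tendsto_subtype_rng]
  have h1 : ∀ t : ℝ, ((Z + (sfun t)^2 • W : ↥so22) : Matrix (Fin 4) (Fin 4) ℝ)
      = (Z : Matrix (Fin 4) (Fin 4) ℝ) + (sfun t)^2 • (W : Matrix (Fin 4) (Fin 4) ℝ) := by
    intro t; rw [coe_add', coe_smul']
  simp only [h1]
  have h2 := Filter.Tendsto.add
    (tendsto_const_nhds (x := (Z : Matrix (Fin 4) (Fin 4) ℝ)) (f := Filter.atTop (α := ℝ)))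
    (sfun_sq_tendsto.smul (tendsto_const_nhds (x := (W : Matrix (Fin 4) (Fin 4) ℝ))))
  simpa using h2

end L64Contraction

open L64Contraction

/-- `L_{6,4} = Isl(2,ℝ)` is a contraction of `so(2,2)`. -/
theorem L64_is_contraction_of_so22
    (M : Type) [LieRing M] [LieAlgebra ℝ M] (c : Module.Basis (Fin 6) ℝ M)
    (hM : ∀ i j : Fin 6, i < j → ⁅c i, c j⁆ = L64T (⇑c) i j) :
    IsContraction (↥so22) M := by
  refine ⟨fun t => fequiv t, e6.trans c.equivFun.symm, fun X Y => ?_⟩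
  have h2 := M_equivFun_bracket c hM
    ((e6.trans c.equivFun.symm) X) ((e6.trans c.equivFun.symm) Y)
  simp only [LinearEquiv.trans_apply, LinearEquiv.apply_symm_apply] at h2
  have hlim : (e6.trans c.equivFun.symm).symm
      ⁅(e6.trans c.equivFun.symm) X, (e6.trans c.equivFun.symm) Y⁆
      = e6.symm (br0 (e6 X) (e6 Y)) := by
    rw [LinearEquiv.symm_trans_apply, LinearEquiv.symm_symm]
    simp only [LinearEquiv.trans_apply] at h2 ⊢
    rw [h2]
  rw [hlim]
  simp only [fequiv_key]
  exact so22_tendsto _ _
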